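/- Let S be a log-normal random variable, i.e., log S ~ N(u − σ²/2, σ²) with σ > 0. Then E[min(1, S)] = e^u · Φ(−u/σ − σ/2) + Φ(u/σ − σ/2), where Φ is the standard normal cumulative distribution function. -/

import Mathlib

open MeasureTheory ProbabilityTheory
open scoped ENNReal NNReal

lemma phi_even' (x : ℝ) : gaussianPDFReal 0 1 (-x) = gaussianPDFReal 0 1 x := by
  simp [gaussianPDFReal, neg_sq]

lemma gauss_integral' (g : ℝ → ℝ) :
    ∫ x, g x ∂(gaussianReal 0 1) = ∫ x, g x * gaussianPDFReal 0 1 x := by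
  rw [gaussianReal_of_var_ne_zero 0 one_ne_zero]
  have hd : (gaussianPDF 0 1)
      = fun x => ((Real.toNNReal (gaussianPDFReal 0 1 x) : ℝ≥0) : ℝ≥0∞) := rfl
  rw [hd, integral_withDensity_eq_integral_smul
    ((measurable_gaussianPDFReal 0 1).real_toNNReal) g]
  congr 1; funext x
  rw [NNReal.smul_def, Real.coe_toNNReal _ (gaussianPDFReal_nonneg 0 1 x), smul_eq_mul,
    mul_comm]

lemma Phi_eq' (t : ℝ) : ((gaussianReal 0 1) (Set.Iic t)).toReal
    = ∫ x in Set.Iic t, gaussianPDFReal 0 1 x := by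
  rw [gaussianReal_apply_eq_integral 0 one_ne_zero, ENNReal.toReal_ofReal]
  exact setIntegral_nonneg measurableSet_Iic fun x _ => gaussianPDFReal_nonneg 0 1 x

lemma exp_mul_gauss' (σ u x : ℝ) :
    Real.exp (σ * x + u - σ ^ 2 / 2) * gaussianPDFReal 0 1 x
      = Real.exp u * gaussianPDFReal 0 1 (x - σ) := by
  have h : ∀ a b : ℝ, Real.exp a * ((Real.sqrt (2 * Real.pi))⁻¹ * Real.exp b)
      = (Real.sqrt (2 * Real.pi))⁻¹ * Real.exp (a + b) := by
    intro a b; rw [Real.exp_add]; ring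
  simp only [gaussianPDFReal, sub_zero, NNReal.coe_one, mul_one]
  rw [h, h]
  congr 1
  rw [Real.exp_eq_exp]
  ring

lemma shift_Iic' (a σ : ℝ) :
    ∫ x in Set.Iic a, gaussianPDFReal 0 1 (x - σ)
      = ∫ x in Set.Iic (a - σ), gaussianPDFReal 0 1 x := by
  rw [← integral_indicator measurableSet_Iic, ← integral_indicator measurableSet_Iic,
    ← integral_sub_right_eq_self
      (Set.indicator (Set.Iic (a - σ)) (gaussianPDFReal 0 1)) σ]
  congr 1; funext x
  simp only [Set.indicator_apply, Set.mem_Iic, sub_le_sub_iff_right]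

lemma neg_Ioi' (a : ℝ) :
    ∫ x in Set.Ioi a, gaussianPDFReal 0 1 x
      = ∫ x in Set.Iic (-a), gaussianPDFReal 0 1 x := by
  rw [show (∫ x in Set.Iic (-a), gaussianPDFReal 0 1 x)
      = ∫ x in Set.Iio (-a), gaussianPDFReal 0 1 x from
    (setIntegral_congr_set Iio_ae_eq_Iic).symm]
  rw [← integral_indicator measurableSet_Ioi, ← integral_indicator measurableSet_Iio,
    ← integral_neg_eq_self (Set.indicator (Set.Ioi a) (gaussianPDFReal 0 1))]
  congr 1; funext x
  simp only [Set.indicator_apply, Set.mem_Ioi, Set.mem_Iio, lt_neg, phi_even']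

theorem stmt5 {Ω : Type*} [MeasurableSpace Ω] (μ : Measure Ω) [IsProbabilityMeasure μ]
    (Z : Ω → ℝ) (hZ : Measure.map Z μ = gaussianReal 0 1)
    (u σ : ℝ) (hσ : 0 < σ)
    (S : Ω → ℝ) (hS : S = fun ω => Real.exp (σ * Z ω + u - σ ^ 2 / 2))
    (Φ : ℝ → ℝ) (hΦ : Φ = fun x => ((gaussianReal 0 1) (Set.Iic x)).toReal) :
    ∫ ω, min 1 (S ω) ∂μ = Real.exp u * Φ (-u / σ - σ / 2) + Φ (u / σ - σ / 2) := by
  have hσ' : σ ≠ 0 := ne_of_gt hσ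
  have hZae : AEMeasurable Z μ := by
    by_contra h
    rw [Measure.map_of_not_aemeasurable h] at hZ
    have h1 : (gaussianReal 0 1) Set.univ = 1 := measure_univ
    rw [← hZ] at h1
    simp at h1
  have hcont : Continuous fun x : ℝ => min 1 (Real.exp (σ * x + u - σ ^ 2 / 2)) := by
    fun_prop
  have step1 : ∫ ω, min 1 (S ω) ∂μ
      = ∫ x, min 1 (Real.exp (σ * x + u - σ ^ 2 / 2)) ∂(gaussianReal 0 1) := by
    rw [← hZ, integral_map hZae hcont.aestronglyMeasurable]
    simp [hS]
  rw [step1, gauss_integral']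
  obtain ⟨a, ha⟩ : ∃ a : ℝ, a = σ / 2 - u / σ := ⟨_, rfl⟩
  have haz : σ * a + u - σ ^ 2 / 2 = 0 := by
    rw [ha]; field_simp; ring
  have hInt : Integrable
      (fun x => min 1 (Real.exp (σ * x + u - σ ^ 2 / 2)) * gaussianPDFReal 0 1 x) := by
    apply (integrable_gaussianPDFReal 0 1).mono
    · exact (hcont.aestronglyMeasurable.mul
        (stronglyMeasurable_gaussianPDFReal 0 1).aestronglyMeasurable)
    · filter_upwards with x
      rw [Real.norm_eq_abs, Real.norm_eq_abs, abs_mul]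
      have h0 : 0 ≤ min 1 (Real.exp (σ * x + u - σ ^ 2 / 2)) :=
        le_min zero_le_one (Real.exp_pos _).le
      have h1 : min 1 (Real.exp (σ * x + u - σ ^ 2 / 2)) ≤ 1 := min_le_left _ _
      calc |min 1 (Real.exp (σ * x + u - σ ^ 2 / 2))| * |gaussianPDFReal 0 1 x|
          ≤ 1 * |gaussianPDFReal 0 1 x| := by
            apply mul_le_mul_of_nonneg_right _ (abs_nonneg _)
            rwa [abs_of_nonneg h0]
        _ = |gaussianPDFReal 0 1 x| := one_mul _
  rw [← intervalIntegral.integral_Iic_add_Ioi (b := a) hInt.integrableOn hInt.integrableOn]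
  have hIic : ∫ x in Set.Iic a, min 1 (Real.exp (σ * x + u - σ ^ 2 / 2)) * gaussianPDFReal 0 1 x
      = Real.exp u * ∫ x in Set.Iic (a - σ), gaussianPDFReal 0 1 x := by
    rw [← shift_Iic', ← integral_const_mul]
    apply setIntegral_congr_fun measurableSet_Iic
    intro x hx
    have hxa : x ≤ a := hx
    have hle : σ * x + u - σ ^ 2 / 2 ≤ 0 := by nlinarith [mul_le_mul_of_nonneg_left hxa hσ.le]
    dsimp only
    rw [min_eq_right (Real.exp_le_one_iff.mpr hle)]
    exact exp_mul_gauss' σ u x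
  have hIoi : ∫ x in Set.Ioi a, min 1 (Real.exp (σ * x + u - σ ^ 2 / 2)) * gaussianPDFReal 0 1 x
      = ∫ x in Set.Ioi a, gaussianPDFReal 0 1 x := by
    apply setIntegral_congr_fun measurableSet_Ioi
    intro x hx
    have hxa : a < x := hx
    have hge : (0 : ℝ) ≤ σ * x + u - σ ^ 2 / 2 := by nlinarith [mul_le_mul_of_nonneg_left hxa.le hσ.le]
    dsimp only
    rw [min_eq_left (Real.one_le_exp hge), one_mul]
  rw [hIic, hIoi, neg_Ioi', hΦ]
  have e1 : -u / σ - σ / 2 = a - σ := by rw [ha]; ring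
  have e2 : u / σ - σ / 2 = -a := by rw [ha]; ring
  rw [e1, e2]
  simp only [Phi_eq']
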